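/- The family of dangerous cuts of a Steiner k-edge-connected graph is uncrossable: if A and B are dangerous cuts with A ∩ B ≠ ∅, A ∖ B ≠ ∅ and B ∖ A ≠ ∅, then either A ∩ B and A ∪ B are both dangerous cuts, or A ∖ B and B ∖ A are both dangerous cuts. -/

import Mathlib

open scoped Classical

/-- An unordered pair has exactly one endpoint in `C`. -/
def CrossesCut {α : Type*} (C : Finset α) (e : Sym2 α) : Prop :=
  ∃ x y : α, e = s(x, y) ∧ x ∈ C ∧ y ∉ C

/-- A dangerous cut: a set `C ⊆ V ∖ {r}` with `|δ(C)| = k` and `C ∩ R ≠ ∅`. -/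
def IsDangerous {α : Type*} (V : Finset α) (E : Finset (Sym2 α)) (R : Finset α)
    (r : α) (k : ℕ) (C : Finset α) : Prop :=
  C ⊆ V ∧ r ∉ C ∧ (E.filter fun e => CrossesCut C e).card = k ∧ (C ∩ R).Nonempty

lemma crosses_iff {α : Type*} (C : Finset α) (x y : α) :
    CrossesCut C s(x, y) ↔ (x ∈ C ∧ y ∉ C) ∨ (y ∈ C ∧ x ∉ C) := by
  constructor
  · rintro ⟨a, b, hab, ha, hb⟩
    rw [Sym2.eq_iff] at hab
    rcases hab with ⟨hx, hy⟩ | ⟨hx, hy⟩ <;> subst hx <;> subst hy <;> tauto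
  · rintro (⟨h1, h2⟩ | ⟨h1, h2⟩)
    exacts [⟨x, y, rfl, h1, h2⟩, ⟨y, x, Sym2.eq_swap.symm, h1, h2⟩]

lemma cut_submod {α : Type*} [DecidableEq α] (E : Finset (Sym2 α)) (A B : Finset α) :
    (E.filter fun e => CrossesCut (A ∩ B) e).card +
      (E.filter fun e => CrossesCut (A ∪ B) e).card ≤
    (E.filter fun e => CrossesCut A e).card + (E.filter fun e => CrossesCut B e).card := by
  classical
  simp only [Finset.card_filter, ← Finset.sum_add_distrib]
  apply Finset.sum_le_sum
  intro e _
  induction e using Sym2.inductionOn with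
  | hf x y =>
    simp only [crosses_iff, Finset.mem_inter, Finset.mem_union]
    by_cases hxa : x ∈ A <;> by_cases hxb : x ∈ B <;>
      by_cases hya : y ∈ A <;> by_cases hyb : y ∈ B <;> simp [hxa, hxb, hya, hyb]

lemma cut_posimod {α : Type*} [DecidableEq α] (E : Finset (Sym2 α)) (A B : Finset α) :
    (E.filter fun e => CrossesCut (A \ B) e).card +
      (E.filter fun e => CrossesCut (B \ A) e).card ≤
    (E.filter fun e => CrossesCut A e).card + (E.filter fun e => CrossesCut B e).card := by
  classical
  simp only [Finset.card_filter, ← Finset.sum_add_distrib]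
  apply Finset.sum_le_sum
  intro e _
  induction e using Sym2.inductionOn with
  | hf x y =>
    simp only [crosses_iff, Finset.mem_sdiff]
    by_cases hxa : x ∈ A <;> by_cases hxb : x ∈ B <;>
      by_cases hya : y ∈ A <;> by_cases hyb : y ∈ B <;> simp [hxa, hxb, hya, hyb]

/-- The family of dangerous cuts of a Steiner `k`-edge-connected graph is uncrossable. -/
theorem stmt14 {α : Type*} [DecidableEq α] (V : Finset α) (E : Finset (Sym2 α))
    (hE : ∀ e ∈ E, ¬e.IsDiag ∧ ∀ x ∈ e, x ∈ V)
    (R : Finset α) (hRV : R ⊆ V) (r : α) (hr : r ∈ R) (k : ℕ) (hk : 1 ≤ k)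
    (hconn : ∀ C : Finset α, C ⊆ V → (C ∩ R).Nonempty → (R \ C).Nonempty →
      k ≤ (E.filter fun e => CrossesCut C e).card)
    (A B : Finset α) (hA : IsDangerous V E R r k A) (hB : IsDangerous V E R r k B)
    (hAB : (A ∩ B).Nonempty) (hABd : (A \ B).Nonempty) (hBAd : (B \ A).Nonempty) :
    (IsDangerous V E R r k (A ∩ B) ∧ IsDangerous V E R r k (A ∪ B)) ∨
      (IsDangerous V E R r k (A \ B) ∧ IsDangerous V E R r k (B \ A)) := by
  have hdec : (fun a b => Classical.propDecidable (a = b)) = ‹DecidableEq α› := by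
    funext a b; exact Subsingleton.elim _ _
  simp only [IsDangerous, hdec] at hA hB ⊢
  subst hdec
  obtain ⟨hAV, hrA, hcA, hAR⟩ := hA
  obtain ⟨hBV, hrB, hcB, hBR⟩ := hB
  by_cases h : ((A ∩ B) ∩ R).Nonempty
  · left
    have hsub1 : A ∩ B ⊆ V := (Finset.inter_subset_left).trans hAV
    have hsub2 : A ∪ B ⊆ V := Finset.union_subset hAV hBV
    have hr1 : r ∉ A ∩ B := fun hmem => hrA (Finset.mem_inter.mp hmem).1
    have hr2 : r ∉ A ∪ B := fun hmem => (Finset.mem_union.mp hmem).elim hrA hrB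
    have hR2 : ((A ∪ B) ∩ R).Nonempty := by
      obtain ⟨a, ha⟩ := hAR
      exact ⟨a, Finset.mem_inter.mpr ⟨Finset.mem_union_left _ (Finset.mem_inter.mp ha).1,
        (Finset.mem_inter.mp ha).2⟩⟩
    have hRc1 : (R \ (A ∩ B)).Nonempty := ⟨r, Finset.mem_sdiff.mpr ⟨hr, hr1⟩⟩
    have hRc2 : (R \ (A ∪ B)).Nonempty := ⟨r, Finset.mem_sdiff.mpr ⟨hr, hr2⟩⟩
    have h1 := hconn (A ∩ B) hsub1 h hRc1
    have h2 := hconn (A ∪ B) hsub2 hR2 hRc2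
    have hsum := cut_submod E A B
    rw [hcA, hcB] at hsum
    exact ⟨⟨hsub1, hr1, by omega, h⟩, ⟨hsub2, hr2, by omega, hR2⟩⟩
  · right
    have hsub1 : A \ B ⊆ V := (Finset.sdiff_subset).trans hAV
    have hsub2 : B \ A ⊆ V := (Finset.sdiff_subset).trans hBV
    have hr1 : r ∉ A \ B := fun hmem => hrA (Finset.mem_sdiff.mp hmem).1
    have hr2 : r ∉ B \ A := fun hmem => hrB (Finset.mem_sdiff.mp hmem).1
    have hR1 : ((A \ B) ∩ R).Nonempty := by
      obtain ⟨a, ha⟩ := hAR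
      obtain ⟨haA, haR⟩ := Finset.mem_inter.mp ha
      refine ⟨a, Finset.mem_inter.mpr ⟨Finset.mem_sdiff.mpr ⟨haA, fun hb => ?_⟩, haR⟩⟩
      exact h ⟨a, Finset.mem_inter.mpr ⟨Finset.mem_inter.mpr ⟨haA, hb⟩, haR⟩⟩
    have hR2 : ((B \ A) ∩ R).Nonempty := by
      obtain ⟨a, ha⟩ := hBR
      obtain ⟨haB, haR⟩ := Finset.mem_inter.mp ha
      refine ⟨a, Finset.mem_inter.mpr ⟨Finset.mem_sdiff.mpr ⟨haB, fun hb => ?_⟩, haR⟩⟩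
      exact h ⟨a, Finset.mem_inter.mpr ⟨Finset.mem_inter.mpr ⟨hb, haB⟩, haR⟩⟩
    have hRc1 : (R \ (A \ B)).Nonempty := ⟨r, Finset.mem_sdiff.mpr ⟨hr, hr1⟩⟩
    have hRc2 : (R \ (B \ A)).Nonempty := ⟨r, Finset.mem_sdiff.mpr ⟨hr, hr2⟩⟩
    have h1 := hconn (A \ B) hsub1 hR1 hRc1
    have h2 := hconn (B \ A) hsub2 hR2 hRc2
    have hsum := cut_posimod E A B
    rw [hcA, hcB] at hsum
    exact ⟨⟨hsub1, hr1, by omega, hR1⟩, ⟨hsub2, hr2, by omega, hR2⟩⟩
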